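/- For every nonnegative integer n, the number of partitions of n in which the even parts are distinct (and the odd parts are unrestricted) equals the number of partitions of n with no part divisible by 4 (i.e., the number of 4-regular partitions of n). -/
import Mathlib

open Multiset

namespace PEDGlaisher

/-- 2-adic valuation. -/
def v (x : ℕ) : ℕ := x.factorization 2

/-- odd part. -/
def u (x : ℕ) : ℕ := x / 2 ^ v x

lemma u_odd {x : ℕ} (hx : x ≠ 0) : ¬ 2 ∣ u x := Nat.not_dvd_ordCompl Nat.prime_two hx

lemma u_pos {x : ℕ} (hx : x ≠ 0) : 0 < u x := Nat.ordCompl_pos 2 hx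

lemma pow_v_mul_u {x : ℕ} (_hx : x ≠ 0) : 2 ^ v x * u x = x :=
  Nat.ordProj_mul_ordCompl_eq_self x 2

lemma v_mul_pow {a m : ℕ} (hm : ¬ 2 ∣ m) (hm0 : m ≠ 0) : v (2 ^ a * m) = a := by
  unfold v
  rw [Nat.factorization_mul (by positivity) hm0]
  simp [Nat.Prime.factorization_pow, Nat.factorization_eq_zero_of_not_dvd hm, Nat.Prime.factorization Nat.prime_two]

lemma u_mul_pow {a m : ℕ} (hm : ¬ 2 ∣ m) (hm0 : m ≠ 0) : u (2 ^ a * m) = m := by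
  unfold u
  rw [v_mul_pow hm hm0, Nat.mul_div_cancel_left _ (by positivity)]

lemma v_pos {x : ℕ} (hx : x ≠ 0) (h2 : 2 ∣ x) : 0 < v x :=
  Nat.Prime.factorization_pos_of_dvd Nat.prime_two hx h2


/-- Split one part: an even part `2^a * m` (m odd, a ≥ 1) becomes `2^(a-1)` copies of `2*m`;
odd parts are unchanged. -/
def f (x : ℕ) : Multiset ℕ :=
  if 2 ∣ x then Multiset.replicate (2 ^ (v x - 1)) (2 * u x) else {x}

def F (s : Multiset ℕ) : Multiset ℕ := s.bind f

lemma count_f_odd {z y : ℕ} (hz : ¬ 2 ∣ z) :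
    (f y).count z = if y = z then 1 else 0 := by
  unfold f
  by_cases hy : 2 ∣ y
  · rw [if_pos hy, Multiset.count_replicate,
      if_neg (fun h : 2 * u y = z => hz (h ▸ ⟨u y, rfl⟩)),
      if_neg (fun h : y = z => hz (h ▸ hy))]
  · rw [if_neg hy]
    rcases eq_or_ne y z with rfl | h
    · simp
    · rw [Multiset.count_singleton, if_neg (fun hh => h hh.symm), if_neg h]

lemma count_f_even {z y : ℕ} (hz : 2 ∣ z) (hy : y ≠ 0) :
    (f y).count z = if 2 ∣ y ∧ 2 * u y = z then 2 ^ (v y - 1) else 0 := by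
  unfold f
  by_cases hdy : 2 ∣ y
  · rw [if_pos hdy, Multiset.count_replicate]
    by_cases h : 2 * u y = z
    · rw [if_pos h, if_pos ⟨hdy, h⟩]
    · rw [if_neg h, if_neg (by tauto)]
  · rw [if_neg hdy, if_neg (by tauto), Multiset.count_singleton, if_neg]
    rintro rfl; exact hdy hz

lemma f_sum {y : ℕ} (hy : y ≠ 0) : (f y).sum = y := by
  unfold f
  by_cases hdy : 2 ∣ y
  · rw [if_pos hdy, Multiset.sum_replicate, smul_eq_mul]
    have hv := v_pos hy hdy
    calc 2 ^ (v y - 1) * (2 * u y) = 2 ^ (v y - 1) * 2 * u y := by ring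
    _ = 2 ^ v y * u y := by
        rw [← pow_succ]
        have : v y - 1 + 1 = v y := by omega
        rw [this]
    _ = y := pow_v_mul_u hy
  · simp [hdy]

lemma mem_f {z y : ℕ} (hy : y ≠ 0) (hz : z ∈ f y) : 0 < z ∧ ¬ 4 ∣ z := by
  unfold f at hz
  by_cases hdy : 2 ∣ y
  · rw [if_pos hdy] at hz
    have := Multiset.eq_of_mem_replicate hz
    subst this
    refine ⟨by have := u_pos hy; omega, fun h4 => u_odd hy ?_⟩
    omega
  · rw [if_neg hdy] at hz
    rw [Multiset.mem_singleton] at hz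
    subst hz
    exact ⟨Nat.pos_of_ne_zero hy, fun h4 => hdy (dvd_trans ⟨2, rfl⟩ h4)⟩

lemma F_sum {s : Multiset ℕ} (hs : ∀ y ∈ s, y ≠ 0) : (F s).sum = s.sum := by
  unfold F
  rw [Multiset.sum_bind]
  rw [show s.map (fun y => (f y).sum) = s.map id from Multiset.map_congr rfl
    (fun y hy => f_sum (hs y hy))]
  simp

lemma mem_F {z : ℕ} {s : Multiset ℕ} (hs : ∀ y ∈ s, y ≠ 0) (hz : z ∈ F s) :
    0 < z ∧ ¬ 4 ∣ z := by
  obtain ⟨y, hy, hzy⟩ := Multiset.mem_bind.mp hz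
  exact mem_f (hs y hy) hzy

lemma count_F_odd {z : ℕ} {s : Multiset ℕ} (hz : ¬ 2 ∣ z) :
    (F s).count z = s.count z := by
  induction s using Multiset.induction with
  | empty => simp [F]
  | cons a s ih =>
    rw [F, Multiset.cons_bind, Multiset.count_add, ← F, ih, Multiset.count_cons,
      count_f_odd hz]
    rcases eq_or_ne a z with rfl | h
    · simp [Nat.add_comm]
    · simp [h, Ne.symm h]

lemma count_F_even {m : ℕ} {s : Multiset ℕ} (hm : ¬ 2 ∣ m) (hs : ∀ y ∈ s, y ≠ 0) :
    (F s).count (2 * m) =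
      ∑ y ∈ s.toFinset.filter (fun y => 2 ∣ y ∧ u y = m),
        s.count y * 2 ^ (v y - 1) := by
  unfold F
  rw [Multiset.count_bind]
  rw [Finset.sum_multiset_map_count]
  rw [← Finset.sum_filter_add_sum_filter_not s.toFinset (fun y => 2 ∣ y ∧ u y = m)]
  have h1 : ∀ y ∈ s.toFinset.filter (fun y => 2 ∣ y ∧ u y = m),
      s.count y • (f y).count (2 * m) = s.count y * 2 ^ (v y - 1) := by
    intro y hy
    rw [Finset.mem_filter] at hy
    rw [count_f_even ⟨m, rfl⟩ (hs y (Multiset.mem_toFinset.mp hy.1)),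
      if_pos ⟨hy.2.1, by rw [hy.2.2]⟩, smul_eq_mul]
  have h2 : ∀ y ∈ s.toFinset.filter (fun y => ¬ (2 ∣ y ∧ u y = m)),
      s.count y • (f y).count (2 * m) = 0 := by
    intro y hy
    rw [Finset.mem_filter] at hy
    rw [count_f_even ⟨m, rfl⟩ (hs y (Multiset.mem_toFinset.mp hy.1)), if_neg, smul_zero]
    intro ⟨h2y, hum⟩
    exact hy.2 ⟨h2y, by omega⟩
  rw [Finset.sum_congr rfl h1, Finset.sum_congr rfl h2]
  simp

lemma count_F_four {z : ℕ} {s : Multiset ℕ} (h4 : 4 ∣ z) (hs : ∀ y ∈ s, y ≠ 0) :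
    (F s).count z = 0 := by
  by_contra h
  have hz : z ∈ F s := by
    rw [← Multiset.count_pos]; omega
  exact (mem_F hs hz).2 h4


lemma eq_two_mul_u {x : ℕ} (hx : x ≠ 0) (h2 : 2 ∣ x) (h4 : ¬ 4 ∣ x) :
    x = 2 * u x ∧ v x = 1 := by
  have hv1 : 0 < v x := v_pos hx h2
  have hvlt : v x < 2 := by
    by_contra hh
    refine h4 ?_
    have h1 : (2:ℕ) ^ 2 ∣ 2 ^ v x := pow_dvd_pow 2 (by omega)
    have h2' : (2:ℕ) ^ v x ∣ x := Nat.ordProj_dvd x 2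
    have : (2:ℕ) ^ 2 ∣ x := dvd_trans h1 h2'
    norm_num at this
    exact this
  have hv : v x = 1 := by omega
  refine ⟨?_, hv⟩
  conv_lhs => rw [← pow_v_mul_u hx]
  rw [hv, pow_one]

/-- The inverse Glaisher step on one value: given that `x` occurs `k` times,
produce parts `2^i * x` for `i` in the binary expansion of `k`. -/
def h (k x : ℕ) : Multiset ℕ := ↑(k.bitIndices.map (fun i => 2 ^ i * x))

def G (s : Multiset ℕ) : Multiset ℕ :=
  s.filter (fun x => ¬ 2 ∣ x) +
    (s.filter (fun x => 2 ∣ x)).dedup.bind (fun x => h (s.count x) x)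

lemma h_sum (k x : ℕ) : (h k x).sum = k * x := by
  have key : ∀ l : List ℕ, (l.map (fun i => 2 ^ i * x)).sum = (l.map (fun i => 2 ^ i)).sum * x := by
    intro l
    induction l with
    | nil => simp
    | cons a l ih => simp [ih, add_mul]
  show (↑(k.bitIndices.map (fun i => 2 ^ i * x)) : Multiset ℕ).sum = k * x
  rw [Multiset.sum_coe, key, Nat.twoPowSum_bitIndices]

lemma mem_h {k x z : ℕ} (hz : z ∈ h k x) : ∃ i ∈ k.bitIndices, 2 ^ i * x = z := by
  unfold h at hz
  rw [Multiset.mem_coe, List.mem_map] at hz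
  obtain ⟨i, hi, he⟩ := hz
  exact ⟨i, hi, he⟩

lemma count_h {k x z : ℕ} (hx : x ≠ 0) :
    (h k x).count z = if ∃ i ∈ k.bitIndices, 2 ^ i * x = z then 1 else 0 := by
  have hinj : Function.Injective (fun i : ℕ => 2 ^ i * x) := by
    intro a b hab
    simp only at hab
    exact Nat.pow_right_injective le_rfl
      (Nat.eq_of_mul_eq_mul_right (Nat.pos_of_ne_zero hx) hab)
  have hnd : (h k x).Nodup := by
    show (↑(k.bitIndices.map (fun i => 2 ^ i * x)) : Multiset ℕ).Nodup
    rw [Multiset.coe_nodup]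
    exact (Nat.bitIndices_sorted (n := k)).nodup.map hinj
  by_cases hmem : ∃ i ∈ k.bitIndices, 2 ^ i * x = z
  · rw [if_pos hmem]
    refine Multiset.count_eq_one_of_mem hnd ?_
    show z ∈ (↑(k.bitIndices.map (fun i => 2 ^ i * x)) : Multiset ℕ)
    rw [Multiset.mem_coe, List.mem_map]
    obtain ⟨i, hi, he⟩ := hmem
    exact ⟨i, hi, he⟩
  · rw [if_neg hmem, Multiset.count_eq_zero]
    intro hzm
    exact hmem (mem_h hzm)

lemma mem_G {z : ℕ} {s : Multiset ℕ} (hs : ∀ x ∈ s, x ≠ 0) (hz : z ∈ G s) : z ≠ 0 := by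
  unfold G at hz
  rw [Multiset.mem_add] at hz
  rcases hz with hz | hz
  · exact hs z (Multiset.mem_of_mem_filter hz)
  · obtain ⟨x, hx, hzx⟩ := Multiset.mem_bind.mp hz
    have hxs : x ∈ s := Multiset.mem_of_mem_filter (Multiset.mem_dedup.mp hx)
    obtain ⟨i, _, he⟩ := mem_h hzx
    have := hs x hxs
    intro h0
    rw [h0] at he
    have : 2 ^ i * x ≠ 0 := by positivity
    omega

lemma count_G_odd {z : ℕ} {s : Multiset ℕ} (hz : ¬ 2 ∣ z) :
    (G s).count z = s.count z := by
  unfold G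
  rw [Multiset.count_add]
  have h1 : (s.filter (fun x => ¬ 2 ∣ x)).count z = s.count z := by
    rw [Multiset.count_filter, if_pos hz]
  have h2 : ((s.filter (fun x => 2 ∣ x)).dedup.bind (fun x => h (s.count x) x)).count z = 0 := by
    rw [Multiset.count_eq_zero]
    intro hmem
    obtain ⟨x, hx, hzx⟩ := Multiset.mem_bind.mp hmem
    have hx2 : 2 ∣ x := Multiset.of_mem_filter (Multiset.mem_dedup.mp hx)
    obtain ⟨i, _, he⟩ := mem_h hzx
    exact hz (he ▸ Dvd.dvd.mul_left hx2 (2 ^ i))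
  rw [h1, h2]; omega

lemma G_sum {s : Multiset ℕ} : (G s).sum = s.sum := by
  unfold G
  rw [Multiset.sum_add, Multiset.sum_bind]
  have key : ((s.filter (fun x => 2 ∣ x)).dedup.map (fun x => (h (s.count x) x).sum)).sum
      = (s.filter (fun x => 2 ∣ x)).sum := by
    have h1 : ∀ x ∈ (s.filter (fun x => 2 ∣ x)).dedup,
        (h (s.count x) x).sum = (s.filter (fun x => 2 ∣ x)).count x * x := by
      intro x hx
      rw [h_sum]
      congr 1
      rw [Multiset.count_filter, if_pos (Multiset.of_mem_filter (Multiset.mem_dedup.mp hx))]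
    rw [Multiset.map_congr rfl h1]
    set t := s.filter (fun x => 2 ∣ x) with ht
    have : (t.dedup.map (fun x => t.count x * x)).sum = ∑ x ∈ t.toFinset, t.count x * x := rfl
    rw [this]
    conv_rhs => rw [show t.sum = (t.map id).sum by simp]
    rw [Finset.sum_multiset_map_count]
    simp
  rw [key]
  have := Multiset.filter_add_not (fun x => ¬ 2 ∣ x) s
  conv_rhs => rw [← this]
  rw [Multiset.sum_add]
  congr 2
  apply Multiset.filter_congr
  intro x _
  constructor
  · intro hh; exact not_not.mpr hh
  · intro hh; exact not_not.mp hh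


lemma count_G_even {z : ℕ} {s : Multiset ℕ} (hz : 2 ∣ z) (hz0 : z ≠ 0)
    (hs : ∀ x ∈ s, x ≠ 0) (h4 : ∀ x ∈ s, ¬ 4 ∣ x) :
    (G s).count z = if (v z - 1) ∈ (s.count (2 * u z)).bitIndices then 1 else 0 := by
  have hvz : 0 < v z := v_pos hz0 hz
  have huz : ¬ 2 ∣ u z := u_odd hz0
  have huz0 : u z ≠ 0 := Nat.pos_iff_ne_zero.mp (u_pos hz0)
  unfold G
  rw [Multiset.count_add]
  have hodd0 : (s.filter (fun x => ¬ 2 ∣ x)).count z = 0 := by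
    rw [Multiset.count_filter, if_neg (not_not.mpr hz)]
  rw [hodd0, zero_add]
  set T := (s.filter (fun x => 2 ∣ x)).toFinset with hT
  have hbind : ((s.filter (fun x => 2 ∣ x)).dedup.bind (fun x => h (s.count x) x)).count z
      = ∑ x ∈ T, (h (s.count x) x).count z := by
    rw [Multiset.count_bind]
    rfl
  rw [hbind]
  have hxprop : ∀ x ∈ T, x ≠ 0 ∧ 2 ∣ x ∧ x = 2 * u x ∧ v x = 1 := by
    intro x hx
    rw [hT, Multiset.mem_toFinset] at hx
    have hx2 : 2 ∣ x := Multiset.of_mem_filter hx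
    have hxs : x ∈ s := Multiset.mem_of_mem_filter hx
    have hx0 : x ≠ 0 := hs x hxs
    obtain ⟨he, hv1⟩ := eq_two_mul_u hx0 hx2 (h4 x hxs)
    exact ⟨hx0, hx2, he, hv1⟩
  have key : ∀ x ∈ T, (h (s.count x) x).count z
      = if x = 2 * u z then (if (v z - 1) ∈ (s.count (2 * u z)).bitIndices then 1 else 0)
        else 0 := by
    intro x hx
    obtain ⟨hx0, hx2, hxe, hv1⟩ := hxprop x hx
    rw [count_h hx0]
    have hux0 : u x ≠ 0 := fun hh => hx0 (by rw [hxe, hh])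
    have hux2 : ¬ 2 ∣ u x := u_odd hx0
    by_cases hcase : x = 2 * u z
    · rw [if_pos hcase]
      have huu : u x = u z := by
        have := hcase ▸ hxe
        omega
      by_cases hbit : (v z - 1) ∈ (s.count (2 * u z)).bitIndices
      · rw [if_pos hbit, if_pos]
        refine ⟨v z - 1, hcase ▸ hbit, ?_⟩
        rw [hxe, huu, ← mul_assoc, ← pow_succ]
        have : v z - 1 + 1 = v z := by omega
        rw [this, mul_comm (2 ^ v z) (u z)] at *
        rw [mul_comm (u z) (2 ^ v z)]
        exact pow_v_mul_u hz0
      · rw [if_neg hbit, if_neg]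
        rintro ⟨i, hi, he⟩
        -- z = 2^i * x = 2^(i+1) * u z, so v z = i + 1
        rw [hxe, huu, ← mul_assoc, ← pow_succ] at he
        have hvz' : v z = i + 1 := by
          have := v_mul_pow (a := i + 1) (m := u z) huz (by omega)
          rw [he] at this
          omega
        have : i = v z - 1 := by omega
        rw [this] at hi
        exact hbit (hcase ▸ hi)
    · rw [if_neg hcase, if_neg]
      rintro ⟨i, hi, he⟩
      rw [hxe, ← mul_assoc, ← pow_succ] at he
      have huu : u z = u x := by
        have hv := v_mul_pow (a := i + 1) (m := u x) hux2 hux0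
        have hu := u_mul_pow (a := i + 1) (m := u x) hux2 hux0
        rw [he] at hu
        omega
      exact hcase (by rw [huu, ← hxe])
  rw [Finset.sum_congr rfl key, Finset.sum_ite_eq' T (2 * u z)]
  by_cases hmem : 2 * u z ∈ T
  · rw [if_pos hmem]
  · rw [if_neg hmem]
    have hcount : s.count (2 * u z) = 0 := by
      rw [Multiset.count_eq_zero]
      intro hzs
      refine hmem ?_
      rw [hT, Multiset.mem_toFinset, Multiset.mem_filter]
      exact ⟨hzs, ⟨u z, rfl⟩⟩
    rw [hcount]
    simp


lemma G_ped {s : Multiset ℕ} (hs : ∀ x ∈ s, x ≠ 0) (h4 : ∀ x ∈ s, ¬ 4 ∣ x) :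
    ∀ z ∈ G s, 2 ∣ z → (G s).count z ≤ 1 := by
  intro z hzG hz2
  rw [count_G_even hz2 (mem_G hs hzG) hs h4]
  split <;> omega

theorem FG {s : Multiset ℕ} (hs0 : ∀ x ∈ s, x ≠ 0) (h4 : ∀ x ∈ s, ¬ 4 ∣ x) :
    F (G s) = s := by
  have hG0 : ∀ x ∈ G s, x ≠ 0 := fun x hx => mem_G hs0 hx
  ext z
  by_cases hz2 : 2 ∣ z
  · by_cases hz0 : z = 0
    · subst hz0
      rw [Multiset.count_eq_zero_of_notMem, Multiset.count_eq_zero_of_notMem]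
      · exact fun hm => hs0 0 hm rfl
      · exact fun hm => lt_irrefl 0 (mem_F hG0 hm).1
    by_cases h4z : 4 ∣ z
    · rw [count_F_four h4z hG0, eq_comm, Multiset.count_eq_zero]
      exact fun hm => h4 z hm h4z
    obtain ⟨hze, hvz⟩ := eq_two_mul_u hz0 hz2 h4z
    have hm2 : ¬ 2 ∣ u z := u_odd hz0
    have hm0 : u z ≠ 0 := Nat.pos_iff_ne_zero.mp (u_pos hz0)
    rw [show ((F (G s)).count z = (F (G s)).count (2 * u z)) from by rw [← hze],
      show (s.count z = s.count (2 * u z)) from by rw [← hze],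
      count_F_even hm2 hG0]
    set k := s.count (2 * u z) with hk
    -- sum over the filtered set equals ∑ i in (bitIndices k).toFinset, 2 ^ i = k
    rw [show k = ∑ i ∈ k.bitIndices.toFinset, 2 ^ i from (Finset.twoPowSum_toFinset_bitIndices k).symm]
    refine Finset.sum_nbij' (fun y => v y - 1) (fun i => 2 ^ (i + 1) * u z) ?_ ?_ ?_ ?_ ?_
    · -- forward membership
      intro y hy
      rw [Finset.mem_filter, Multiset.mem_toFinset] at hy
      obtain ⟨hyG, hy2, hyu⟩ := hy
      have hy0 : y ≠ 0 := hG0 y hyG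
      have := count_G_even hy2 hy0 hs0 h4
      have hcy : 0 < (G s).count y := Multiset.count_pos.mpr hyG
      rw [this, hyu] at hcy
      rw [List.mem_toFinset]
      by_contra hcon
      rw [if_neg hcon] at hcy
      omega
    · -- backward membership
      intro i hi
      rw [List.mem_toFinset] at hi
      rw [Finset.mem_filter, Multiset.mem_toFinset]
      have hyu : u (2 ^ (i + 1) * u z) = u z := u_mul_pow hm2 hm0
      have hyv : v (2 ^ (i + 1) * u z) = i + 1 := v_mul_pow hm2 hm0
      have hy2 : 2 ∣ 2 ^ (i + 1) * u z := ⟨2 ^ i * u z, by ring⟩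
      have hy0 : 2 ^ (i + 1) * u z ≠ 0 := by positivity
      refine ⟨?_, hy2, hyu⟩
      rw [← Multiset.count_pos, count_G_even hy2 hy0 hs0 h4, hyu, hyv]
      simp only [Nat.add_sub_cancel]
      rw [if_pos (by rw [← hk]; exact hi)]
      omega
    · -- left inverse
      intro y hy
      rw [Finset.mem_filter, Multiset.mem_toFinset] at hy
      obtain ⟨hyG, hy2, hyu⟩ := hy
      have hy0 : y ≠ 0 := hG0 y hyG
      have hvy : 0 < v y := v_pos hy0 hy2
      have hstep : v y - 1 + 1 = v y := by omega
      show 2 ^ (v y - 1 + 1) * u z = y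
      rw [hstep, ← hyu, pow_v_mul_u hy0]
    · -- right inverse
      intro i hi
      show v (2 ^ (i + 1) * u z) - 1 = i
      rw [v_mul_pow hm2 hm0]
      omega
    · -- values agree
      intro y hy
      rw [Finset.mem_filter, Multiset.mem_toFinset] at hy
      obtain ⟨hyG, hy2, hyu⟩ := hy
      have hy0 : y ≠ 0 := hG0 y hyG
      have hc1 : (G s).count y = 1 := by
        have := count_G_even hy2 hy0 hs0 h4
        have hcy : 0 < (G s).count y := Multiset.count_pos.mpr hyG
        rw [this] at hcy ⊢
        split at hcy
        · rw [if_pos (by assumption)]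
        · omega
      rw [hc1, one_mul]
  · rw [count_F_odd hz2, count_G_odd hz2]

theorem GF {s : Multiset ℕ} (hs0 : ∀ y ∈ s, y ≠ 0)
    (hped : ∀ y ∈ s, 2 ∣ y → s.count y ≤ 1) : G (F s) = s := by
  have hF0 : ∀ z ∈ F s, z ≠ 0 := fun z hz => Nat.pos_iff_ne_zero.mp (mem_F hs0 hz).1
  have hF4 : ∀ z ∈ F s, ¬ 4 ∣ z := fun z hz => (mem_F hs0 hz).2
  ext z
  by_cases hz2 : 2 ∣ z
  · by_cases hz0 : z = 0
    · subst hz0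
      rw [Multiset.count_eq_zero_of_notMem (fun hm => mem_G hF0 hm rfl),
        Multiset.count_eq_zero_of_notMem (fun hm => hs0 0 hm rfl)]
    have hm2 : ¬ 2 ∣ u z := u_odd hz0
    have hm0 : u z ≠ 0 := Nat.pos_iff_ne_zero.mp (u_pos hz0)
    have hvz : 0 < v z := v_pos hz0 hz2
    rw [count_G_even hz2 hz0 hF0 hF4, count_F_even hm2 hs0]
    set S := s.toFinset.filter (fun y => 2 ∣ y ∧ u y = u z) with hS
    have hScount : ∀ y ∈ S, s.count y * 2 ^ (v y - 1) = 2 ^ (v y - 1) := by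
      intro y hy
      rw [hS, Finset.mem_filter, Multiset.mem_toFinset] at hy
      have : s.count y = 1 := by
        have h1 := hped y hy.1 hy.2.1
        have h2 : 0 < s.count y := Multiset.count_pos.mpr hy.1
        omega
      rw [this, one_mul]
    rw [Finset.sum_congr rfl hScount]
    have hinj : ∀ y ∈ S, ∀ y' ∈ S, v y - 1 = v y' - 1 → y = y' := by
      intro y hy y' hy'
      rw [hS, Finset.mem_filter, Multiset.mem_toFinset] at hy hy'
      intro hvv
      have hy0 : y ≠ 0 := hs0 y hy.1
      have hy'0 : y' ≠ 0 := hs0 y' hy'.1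
      have h1 : 0 < v y := v_pos hy0 hy.2.1
      have h2 : 0 < v y' := v_pos hy'0 hy'.2.1
      have : v y = v y' := by omega
      calc y = 2 ^ v y * u y := (pow_v_mul_u hy0).symm
        _ = 2 ^ v y' * u y' := by rw [this, hy.2.2, hy'.2.2]
        _ = y' := pow_v_mul_u hy'0
    rw [show (∑ y ∈ S, 2 ^ (v y - 1)) = ∑ i ∈ S.image (fun y => v y - 1), 2 ^ i from
      (Finset.sum_image hinj).symm]
    have hbit : (∑ i ∈ S.image (fun y => v y - 1), 2 ^ i).bitIndices.toFinset
        = S.image (fun y => v y - 1) :=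
      Finset.toFinset_bitIndices_twoPowSum (S.image (fun y => v y - 1))
    -- now: (if v z - 1 ∈ bitIndices then 1 else 0) = s.count z
    by_cases hmem : v z - 1 ∈ S.image (fun y => v y - 1)
    · rw [if_pos (by rw [← List.mem_toFinset, hbit]; exact hmem), eq_comm]
      obtain ⟨y, hyS, hvy⟩ := Finset.mem_image.mp hmem
      have hy := hyS
      rw [hS, Finset.mem_filter, Multiset.mem_toFinset] at hy
      have hy0 : y ≠ 0 := hs0 y hy.1
      have h1 : 0 < v y := v_pos hy0 hy.2.1
      have hvv : v y = v z := by omega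
      have hyz : y = z := by
        calc y = 2 ^ v y * u y := (pow_v_mul_u hy0).symm
          _ = 2 ^ v z * u z := by rw [hvv, hy.2.2]
          _ = z := pow_v_mul_u hz0
      have h2 : 0 < s.count z := Multiset.count_pos.mpr (hyz ▸ hy.1)
      have h3 := hped z (hyz ▸ hy.1) hz2
      omega
    · rw [if_neg (fun hh => hmem (by rwa [← hbit, List.mem_toFinset])), eq_comm,
        Multiset.count_eq_zero]
      intro hzs
      refine hmem (Finset.mem_image.mpr ⟨z, ?_, rfl⟩)
      rw [hS, Finset.mem_filter, Multiset.mem_toFinset]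
      exact ⟨hzs, hz2, rfl⟩
  · rw [count_G_odd hz2, count_F_odd hz2]


lemma even_iff_two_dvd' {x : ℕ} : Even x ↔ 2 ∣ x :=
  ⟨fun ⟨r, hr⟩ => ⟨r, by omega⟩, fun ⟨r, hr⟩ => ⟨r, by omega⟩⟩

/-- Glaisher's bijection between partitions with distinct even parts and
4-regular partitions. -/
def glaisherEquiv (n : ℕ) :
    {p : n.Partition // ∀ x ∈ p.parts, Even x → p.parts.count x ≤ 1} ≃
    {p : n.Partition // ∀ x ∈ p.parts, ¬ (4 ∣ x)} where
  toFun p :=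
    ⟨⟨F p.1.parts,
      fun {i} hi => (mem_F (fun y hy => Nat.pos_iff_ne_zero.mp (p.1.parts_pos hy)) hi).1,
      by rw [F_sum (fun y hy => Nat.pos_iff_ne_zero.mp (p.1.parts_pos hy))]
         exact p.1.parts_sum⟩,
      fun x hx => (mem_F (fun y hy => Nat.pos_iff_ne_zero.mp (p.1.parts_pos hy)) hx).2⟩
  invFun q :=
    ⟨⟨G q.1.parts,
      fun {i} hi => Nat.pos_of_ne_zero
        (mem_G (fun y hy => Nat.pos_iff_ne_zero.mp (q.1.parts_pos hy)) hi),
      by rw [G_sum]; exact q.1.parts_sum⟩,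
      fun x hx hev => G_ped (fun y hy => Nat.pos_iff_ne_zero.mp (q.1.parts_pos hy))
        q.2 x hx (even_iff_two_dvd'.mp hev)⟩
  left_inv p := by
    apply Subtype.ext
    apply Nat.Partition.ext
    exact GF (fun y hy => Nat.pos_iff_ne_zero.mp (p.1.parts_pos hy))
      (fun y hy h2 => p.2 y hy (even_iff_two_dvd'.mpr h2))
  right_inv q := by
    apply Subtype.ext
    apply Nat.Partition.ext
    exact FG (fun y hy => Nat.pos_iff_ne_zero.mp (q.1.parts_pos hy)) q.2

end PEDGlaisher

/-- `ped n` is the number of partitions of `n` in which the even parts are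
distinct (and the odd parts are unrestricted). -/
def ped (n : ℕ) : ℕ :=
  Fintype.card {p : n.Partition // ∀ x ∈ p.parts, Even x → p.parts.count x ≤ 1}

theorem ped_eq_four_regular (n : ℕ) :
    ped n = Fintype.card {p : n.Partition // ∀ x ∈ p.parts, ¬ (4 ∣ x)} :=
  Fintype.card_congr (PEDGlaisher.glaisherEquiv n)
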